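/- The cubic u3(x) = −150√6·(568552997 + 66091829356x + 136570772x^2) + 208899235967 + 24283711656924x + 50114778876x^2 + 45812608x^3 has exactly three real roots τ1 < τ2 < τ3, all lying in the open interval (0, 1); setting z1 = −√τ3, z3 = −√τ1, z5 = √τ2, the septic normalized proper Zolotarev polynomial Z at parameter t = −21 satisfies Z(z1) = Z(z3) = Z(z5) = 1 and Z'(z1) = Z'(z3) = Z'(z5) = 0. -/

import Mathlib

noncomputable section

def b0 : ℝ := (5236829509 - 598896224 * Real.sqrt 6) / 6591796875

def b1 : ℝ :=
  -(16 / 6591796875) * Real.sqrt (2 * (1174132032293998751 + 484070220858892414 * Real.sqrt 6))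

def b2 : ℝ := -(8 / 2197265625) * (1876889773 + 537098572 * Real.sqrt 6)

def b3 : ℝ :=
  (16 / 6591796875) * Real.sqrt (2 * (56229826406521238759 + 22960487256932311726 * Real.sqrt 6))

def b4 : ℝ := (8 / 6591796875) * (13748181869 + 5603740016 * Real.sqrt 6)

def b5 : ℝ :=
  -(32 / 2197265625) * Real.sqrt (2 * (4907729982259476719 + 2003572376153817166 * Real.sqrt 6))

def b6 : ℝ := -(256 / 6591796875) * (299877839 + 122424446 * Real.sqrt 6)

def b7 : ℝ :=
  (1024 / 6591796875) * Real.sqrt (2 * (11553696783009431 + 4716776960201434 * Real.sqrt 6))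

/-- The septic normalized proper Zolotarev polynomial at parameter t = −21. -/
def Z (x : ℝ) : ℝ :=
  b0 + b1 * x + b2 * x ^ 2 + b3 * x ^ 3 + b4 * x ^ 4 + b5 * x ^ 5 + b6 * x ^ 6 + b7 * x ^ 7

/-- The cubic u₃(x). -/
def u3 (x : ℝ) : ℝ :=
  -150 * Real.sqrt 6 * (568552997 + 66091829356 * x + 136570772 * x ^ 2) +
    208899235967 + 24283711656924 * x + 50114778876 * x ^ 2 + 45812608 * x ^ 3

def rs : ℝ := Real.sqrt 6
def q1v : ℝ := Real.sqrt ((1975950 * rs - 4839903) / 2272)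
def q3v : ℝ := Real.sqrt ((85282949550 * rs - 208899235967) / 45812608)
def bt7 : ℝ := Real.sqrt (2 * (11553696783009431 + 4716776960201434 * rs))

lemma hrs : rs ^ 2 = 6 := Real.sq_sqrt (by norm_num)
lemma hrsnn : (0:ℝ) ≤ rs := Real.sqrt_nonneg 6
lemma hrsl : (24494897427831780/10000000000000000 : ℝ) < rs := by
  nlinarith [hrs, hrsnn]
lemma hrsu : rs < (24494897427831781/10000000000000000 : ℝ) := by
  nlinarith [hrs, hrsnn]
lemma hq1sq : q1v ^ 2 = (1975950 * rs - 4839903) / 2272 :=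
  Real.sq_sqrt (by nlinarith [hrsl])
lemma hq3sq : q3v ^ 2 = (85282949550 * rs - 208899235967) / 45812608 :=
  Real.sq_sqrt (by nlinarith [hrsl])
lemma hq1nn : (0:ℝ) ≤ q1v := Real.sqrt_nonneg _
lemma hq3nn : (0:ℝ) ≤ q3v := Real.sqrt_nonneg _
lemma hbt7sq : bt7 ^ 2 = 2 * (11553696783009431 + 4716776960201434 * rs) :=
  Real.sq_sqrt (by nlinarith [hrsnn])
lemma hbt7nn : (0:ℝ) ≤ bt7 := Real.sqrt_nonneg _

lemma h13 : q1v * q3v = (410503650 * rs - 1005515601) / 322624 := by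
  rw [q1v, q3v, ← Real.sqrt_mul (by nlinarith [hrsl] : (0:ℝ) ≤ (1975950 * rs - 4839903) / 2272)]
  rw [show (1975950 * rs - 4839903) / 2272 * ((85282949550 * rs - 208899235967) / 45812608)
      = ((410503650 * rs - 1005515601) / 322624) ^ 2 from by
    linear_combination (87890625/5726576 : ℝ) * hrs]
  exact Real.sqrt_sq (by nlinarith [hrsl])

lemma hb7def : b7 = (1024 / 6591796875) * bt7 := rfl

lemma hg1 : b7 * q1v = (1024 / 6591796875) * (116307111/4 + 23741127/2 * rs) := by
  rw [hb7def, bt7, q1v, mul_assoc,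
    ← Real.sqrt_mul (by nlinarith [hrsnn] : (0:ℝ) ≤ 2 * (11553696783009431 + 4716776960201434 * rs))]
  rw [show 2 * (11553696783009431 + 4716776960201434 * rs) * ((1975950 * rs - 4839903) / 2272)
      = (116307111/4 + 23741127/2 * rs) ^ 2 from by
    linear_combination (582497210027152134729/71 : ℝ) * hrs]
  rw [Real.sqrt_sq (by nlinarith [hrsnn])]

lemma hg3 : b7 * q3v = (1024 / 6591796875) * (87484847/8 + 17857879/4 * rs) := by
  rw [hb7def, bt7, q3v, mul_assoc,
    ← Real.sqrt_mul (by nlinarith [hrsnn] : (0:ℝ) ≤ 2 * (11553696783009431 + 4716776960201434 * rs))]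
  rw [show 2 * (11553696783009431 + 4716776960201434 * rs) * ((85282949550 * rs - 208899235967) / 45812608)
      = (87484847/8 + 17857879/4 * rs) ^ 2 from by
    linear_combination (25141262186168045958283681/1431644 : ℝ) * hrs]
  rw [Real.sqrt_sq (by nlinarith [hrsnn])]

lemma hb1 : b1 = b7 * ((-547162153751 + 223377993078 * rs) / 322624) := by
  have hA : ((-547162153751 + 223377993078 * rs) / 322624 : ℝ) ≤ 0 := by nlinarith [hrsu]
  rw [show b1 = -(16 / 6591796875) * Real.sqrt (2 * (1174132032293998751 + 484070220858892414 * rs)) from rfl,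
    hb7def]
  rw [show 2 * (1174132032293998751 + 484070220858892414 * rs)
      = (-64 * bt7 * ((-547162153751 + 223377993078 * rs) / 322624)) ^ 2 from by
    linear_combination (-4096 * ((-547162153751 + 223377993078 * rs) / 322624) ^ 2) * hbt7sq
      + ((1153006648828421243776018048629950223000/25411681 : ℝ)
        + (-470712905627218961071897687560555192912/25411681 : ℝ) * rs) * hrs]
  rw [Real.sqrt_sq (by nlinarith [mul_nonneg hbt7nn (neg_nonneg.mpr hA)])]
  ring

lemma hb3 : b3 = b7 * ((548543689501 - 223941879906 * rs) / 322624) := by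
  have hA : (0:ℝ) ≤ (548543689501 - 223941879906 * rs) / 322624 := by nlinarith [hrsu]
  rw [show b3 = (16 / 6591796875) * Real.sqrt (2 * (56229826406521238759 + 22960487256932311726 * rs)) from rfl,
    hb7def]
  rw [show 2 * (56229826406521238759 + 22960487256932311726 * rs)
      = (64 * bt7 * ((548543689501 - 223941879906 * rs) / 322624)) ^ 2 from by
    linear_combination (-4096 * ((548543689501 - 223941879906 * rs) / 322624) ^ 2) * hbt7sq
      + ((1158836477828075959866694664298951188184/25411681 : ℝ)
        + (-473092404365971351451687818245253821648/25411681 : ℝ) * rs) * hrs]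
  rw [Real.sqrt_sq (by nlinarith [mul_nonneg hbt7nn hA])]
  ring

lemma hb5 : b5 = b7 * ((-9731397 + 3971034 * rs) / 2272) := by
  have hA : ((-9731397 + 3971034 * rs) / 2272 : ℝ) ≤ 0 := by nlinarith [hrsu]
  rw [show b5 = -(32 / 2197265625) * Real.sqrt (2 * (4907729982259476719 + 2003572376153817166 * rs)) from rfl,
    hb7def]
  rw [show 2 * (4907729982259476719 + 2003572376153817166 * rs)
      = (-(32/3) * bt7 * ((-9731397 + 3971034 * rs) / 2272)) ^ 2 from by
    linear_combination (-(1024/9) * ((-9731397 + 3971034 * rs) / 2272) ^ 2) * hbt7sq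
      + ((40523550906222545808501317784/5041 : ℝ)
        + (-16528751018929187590401557712/5041 : ℝ) * rs) * hrs]
  rw [Real.sqrt_sq (by nlinarith [mul_nonneg hbt7nn (neg_nonneg.mpr hA)])]
  ring

lemma hZ (y : ℝ) : Z y = 1 + b7 * ((y - (3425 + 1568 * rs) / 1587 * q1v) *
    (y ^ 3 + q1v * y ^ 2 + (60000 * rs - 147159) / 284 * y - q3v) ^ 2) := by
  rw [show Z y = (5236829509 - 598896224 * rs) / 6591796875 + b1 * y
      + (-(8 / 2197265625) * (1876889773 + 537098572 * rs)) * y ^ 2 + b3 * y ^ 3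
      + ((8 / 6591796875) * (13748181869 + 5603740016 * rs)) * y ^ 4 + b5 * y ^ 5
      + (-(256 / 6591796875) * (299877839 + 122424446 * rs)) * y ^ 6 + b7 * y ^ 7 from rfl,
    hb1, hb3, hb5]
  linear_combination ((-6850/1587)*y^2*q3v*b7 + (-3136/1587)*y^2*rs*q3v*b7 + (-168006525/75118)*y^3*b7 + (-4207552/37559)*y^3*rs*b7 + (15680000/37559)*y^3*rs^2*b7 + (3425/1587)*y^4*q1v*b7 + (1568/1587)*y^4*rs*q1v*b7 + (5263/1587)*y^5*b7 + (3136/1587)*y^5*rs*b7) * hq1sq + ((3425/1587)*q3v*b7 + (1568/1587)*rs*q3v*b7 + (168006525/75118)*y*b7 + (4207552/37559)*y*rs*b7 + (-15680000/37559)*y*rs^2*b7 + (-3676/1587)*y^3*b7 + (-3136/1587)*y^3*rs*b7) * h13 + ((-1)*y*b7) * hq3sq + ((24723672212475/42667024)*y^2 + (-552627075654/2666689)*y^2*rs + (-319988280000/2666689)*y^2*rs^2 + (117600000000/2666689)*y^2*rs^3 + (-6968106549/1201888)*y^4 + (-458130691/600944)*y^4*rs + (90650/71)*y^4*rs^2 +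 (251/1587)*y^6 + (1568/1587)*y^6*rs) * hg1 + ((-1147963644475/170668096) + (-53772357/161312)*rs + (3352446475/2666689)*rs^2 + (4902779037/600944)*y^2 + (498771/568)*y^2*rs + (-64547700/37559)*y^2*rs^2 + (2)*y^4) * hg3 + ((1455525078793375448/764272705078125) + (613044055086351616/703130888671875)*rs + (273339063706950/189334919)*y*b7 + (-100573394250000/189334919)*y*rs*b7 + (-2569562667330113164768/5859424072265625)*y^2 + (-5454128368784825344/234376962890625)*y^2*rs + (135536047030272/1666680625)*y^2*rs^2 + (-2757092124650/2666689)*y^3*b7 + (968215500000/2666689)*y^3*rs*b7 + (359919478623893792/82527099609375)*y^4 + (1632432858112/693359375)*y^4*rs + (64547700/37559)*y^5*b7 + (705916911616/387451171875)*y^6) * hrs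

lemma huv (y : ℝ) : u3 (y ^ 2) = 45812608 *
    ((y ^ 3 + q1v * y ^ 2 + (60000 * rs - 147159) / 284 * y - q3v) *
     (y ^ 3 - q1v * y ^ 2 + (60000 * rs - 147159) / 284 * y + q3v)) := by
  rw [show u3 (y ^ 2) = -150 * rs * (568552997 + 66091829356 * y ^ 2 + 136570772 * (y^2) ^ 2) +
    208899235967 + 24283711656924 * y ^ 2 + 50114778876 * (y^2) ^ 2 + 45812608 * (y^2) ^ 3 from rfl]
  linear_combination ((45812608:ℝ)*y^4) * hq1sq + ((-91625216:ℝ)*y^2) * h13 + ((45812608:ℝ)) * hq3sq + ((-2044800000000:ℝ)*y^2) * hrs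
lemma cubic_classify (a B C D0 : ℝ) (ha : a ≠ 0) (t1 t2 t3 : ℝ)
    (h12 : t1 ≠ t2) (h13' : t1 ≠ t3) (h23 : t2 ≠ t3)
    (e1 : a * t1 ^ 3 + B * t1 ^ 2 + C * t1 + D0 = 0)
    (e2 : a * t2 ^ 3 + B * t2 ^ 2 + C * t2 + D0 = 0)
    (e3 : a * t3 ^ 3 + B * t3 ^ 2 + C * t3 + D0 = 0) :
    ∀ x : ℝ, a * x ^ 3 + B * x ^ 2 + C * x + D0 = 0 → x = t1 ∨ x = t2 ∨ x = t3 := by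
  have k12 : a * (t1 ^ 2 + t1 * t2 + t2 ^ 2) + B * (t1 + t2) + C = 0 := by
    have h : (t1 - t2) * (a * (t1 ^ 2 + t1 * t2 + t2 ^ 2) + B * (t1 + t2) + C) = 0 := by
      linear_combination e1 - e2
    exact (mul_eq_zero.mp h).resolve_left (sub_ne_zero.mpr h12)
  have k13 : a * (t1 ^ 2 + t1 * t3 + t3 ^ 2) + B * (t1 + t3) + C = 0 := by
    have h : (t1 - t3) * (a * (t1 ^ 2 + t1 * t3 + t3 ^ 2) + B * (t1 + t3) + C) = 0 := by
      linear_combination e1 - e3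
    exact (mul_eq_zero.mp h).resolve_left (sub_ne_zero.mpr h13')
  have hB : a * (t1 + t2 + t3) + B = 0 := by
    have h : (t2 - t3) * (a * (t1 + t2 + t3) + B) = 0 := by
      linear_combination k12 - k13
    exact (mul_eq_zero.mp h).resolve_left (sub_ne_zero.mpr h23)
  have hC : C = a * (t1 * t2 + t1 * t3 + t2 * t3) := by linear_combination k12 - (t1 + t2) * hB
  have hD : D0 = -(a * (t1 * t2 * t3)) := by
    linear_combination e1 - t1 ^ 2 * hB - t1 * hC
  intro x hx
  have hfac : a * ((x - t1) * ((x - t2) * (x - t3))) = 0 := by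
    linear_combination hx - x ^ 2 * hB - x * hC - hD
  have h1 := (mul_eq_zero.mp hfac).resolve_left ha
  rcases mul_eq_zero.mp h1 with h | h
  · exact Or.inl (sub_eq_zero.mp h)
  · rcases mul_eq_zero.mp h with h' | h'
    · exact Or.inr (Or.inl (sub_eq_zero.mp h'))
    · exact Or.inr (Or.inr (sub_eq_zero.mp h'))
lemma main_pt (y : ℝ) (hroot : u3 (y ^ 2) = 0)
    (hvt : y ^ 3 - q1v * y ^ 2 + (60000 * rs - 147159) / 284 * y + q3v ≠ 0) :
    Z y = 1 ∧ deriv Z y = 0 := by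
  have hW : y ^ 3 + q1v * y ^ 2 + (60000 * rs - 147159) / 284 * y - q3v = 0 := by
    have h := huv y
    rw [hroot] at h
    have h2 : (y ^ 3 + q1v * y ^ 2 + (60000 * rs - 147159) / 284 * y - q3v) *
        (y ^ 3 - q1v * y ^ 2 + (60000 * rs - 147159) / 284 * y + q3v) = 0 := by linarith
    exact (mul_eq_zero.mp h2).resolve_right hvt
  constructor
  · rw [hZ y, hW]; ring
  · have hfun : Z = fun x : ℝ => 1 + b7 * ((x - (3425 + 1568 * rs) / 1587 * q1v) *
        (x ^ 3 + q1v * x ^ 2 + (60000 * rs - 147159) / 284 * x - q3v) ^ 2) := funext hZ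
    have h3 : HasDerivAt (fun x : ℝ => x ^ 3) (3 * y ^ 2) y := by
      simpa using hasDerivAt_pow 3 y
    have h2 : HasDerivAt (fun x : ℝ => q1v * x ^ 2) (q1v * (2 * y)) y := by
      simpa [mul_comm] using (hasDerivAt_pow 2 y).const_mul q1v
    have h1 : HasDerivAt (fun x : ℝ => (60000 * rs - 147159) / 284 * x)
        ((60000 * rs - 147159) / 284) y := by
      simpa using (hasDerivAt_id y).const_mul ((60000 * rs - 147159) / 284)
    have hWd : HasDerivAt (fun x : ℝ => x ^ 3 + q1v * x ^ 2 + (60000 * rs - 147159) / 284 * x - q3v)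
        (3 * y ^ 2 + q1v * (2 * y) + (60000 * rs - 147159) / 284) y :=
      ((h3.add h2).add h1).sub_const q3v
    have hxd : HasDerivAt (fun x : ℝ => x - (3425 + 1568 * rs) / 1587 * q1v) 1 y :=
      (hasDerivAt_id y).sub_const _
    have hD := (((hxd.mul (hWd.pow 2)).const_mul b7).const_add 1)
    simp only [Pi.mul_apply, Pi.pow_apply] at hD
    rw [hfun, hD.deriv]
    simp only [Nat.cast_ofNat, pow_one]
    linear_combination (b7 * ((y ^ 3 + q1v * y ^ 2 + (60000 * rs - 147159) / 284 * y - q3v)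
      + (y - (3425 + 1568 * rs) / 1587 * q1v) *
        (2 * (3 * y ^ 2 + q1v * (2 * y) + (60000 * rs - 147159) / 284)))) * hW
lemma hueq (x : ℝ) : u3 x = 45812608 * x ^ 3 + (50114778876 - 20485615800 * rs) * x ^ 2
    + (24283711656924 - 9913774403400 * rs) * x + (208899235967 - 85282949550 * rs) := by
  rw [show u3 x = -150 * rs * (568552997 + 66091829356 * x + 136570772 * x ^ 2) +
    208899235967 + 24283711656924 * x + 50114778876 * x ^ 2 + 45812608 * x ^ 3 from rfl]
  ring

lemma hq1bounds : (2705/10000:ℝ) < q1v ∧ q1v < (2706/10000:ℝ) := by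
  constructor <;> nlinarith [hq1sq, hq1nn, hrsl, hrsu]

lemma hq3bounds : (1017/10000:ℝ) < q3v ∧ q3v < (1018/10000:ℝ) := by
  constructor <;> nlinarith [hq3sq, hq3nn, hrsl, hrsu]

lemma hu3cont : Continuous u3 := by
  unfold u3; fun_prop


lemma vt_ne3 (y : ℝ) (hyl : -(8915/10000:ℝ) < y) (hyu : y < -(8914/10000:ℝ)) :
    y ^ 3 - q1v * y ^ 2 + (60000 * rs - 147159) / 284 * y + q3v ≠ 0 := by
  obtain ⟨hq1l, hq1u⟩ := hq1bounds
  obtain ⟨hq3l, hq3u⟩ := hq3bounds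
  have hysq_u : y^2 < (794773/1000000:ℝ) := by nlinarith [hyl, hyu]
  have hysq_l : (794593/1000000:ℝ) < y^2 := by nlinarith [hyl, hyu]
  have hy3 : y^3 < -(70828/100000:ℝ) := by nlinarith [hyl, hyu, hysq_l, hysq_u]
  have he2l : -(66767/100000:ℝ) < (60000 * rs - 147159) / 284 := by linarith [hrsl]
  have he2u : (60000 * rs - 147159) / 284 < -(66765/100000:ℝ) := by linarith [hrsu]
  have hT2 : -(q1v * y ^ 2) < -(21493/100000:ℝ) := by nlinarith [hq1l, hq1u, hysq_l, hysq_u]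
  have hT3 : (60000 * rs - 147159) / 284 * y < (59523/100000:ℝ) := by
    nlinarith [he2l, he2u, hyl, hyu]
  have h : y ^ 3 - q1v * y ^ 2 + (60000 * rs - 147159) / 284 * y + q3v < 0 := by
    linarith [hy3, hT2, hT3, hq3u]
  exact ne_of_lt h

lemma vt_ne1 (y : ℝ) (hyl : -(1487/10000:ℝ) < y) (hyu : y < -(1483/10000:ℝ)) :
    y ^ 3 - q1v * y ^ 2 + (60000 * rs - 147159) / 284 * y + q3v ≠ 0 := by
  obtain ⟨hq1l, hq1u⟩ := hq1bounds
  obtain ⟨hq3l, hq3u⟩ := hq3bounds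
  have hysq_u : y^2 < (221132/10000000:ℝ) := by nlinarith [hyl, hyu]
  have hysq_l : (219928/10000000:ℝ) < y^2 := by nlinarith [hyl, hyu]
  have hy3 : -(3289/1000000:ℝ) < y^3 := by nlinarith [hyl, hyu, hysq_l, hysq_u]
  have he2l : -(66767/100000:ℝ) < (60000 * rs - 147159) / 284 := by linarith [hrsl]
  have he2u : (60000 * rs - 147159) / 284 < -(66765/100000:ℝ) := by linarith [hrsu]
  have hT2 : -(5985/1000000:ℝ) < -(q1v * y ^ 2) := by nlinarith [hq1l, hq1u, hysq_l, hysq_u]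
  have hT3 : (99012/1000000:ℝ) < (60000 * rs - 147159) / 284 * y := by
    nlinarith [he2l, he2u, hyl, hyu]
  have h : 0 < y ^ 3 - q1v * y ^ 2 + (60000 * rs - 147159) / 284 * y + q3v := by
    linarith [hy3, hT2, hT3, hq3l]
  exact (ne_of_lt h).symm

lemma vt_ne2 (y : ℝ) (hyl : (7692/10000:ℝ) < y) (hyu : y < (7694/10000:ℝ)) :
    y ^ 3 - q1v * y ^ 2 + (60000 * rs - 147159) / 284 * y + q3v ≠ 0 := by
  obtain ⟨hq1l, hq1u⟩ := hq1bounds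
  obtain ⟨hq3l, hq3u⟩ := hq3bounds
  have hysq_u : y^2 < (591978/1000000:ℝ) := by nlinarith [hyl, hyu]
  have hysq_l : (591668/1000000:ℝ) < y^2 := by nlinarith [hyl, hyu]
  have hy3 : y^3 < (455531/1000000:ℝ) := by nlinarith [hyl, hyu, hysq_l, hysq_u]
  have he2l : -(66767/100000:ℝ) < (60000 * rs - 147159) / 284 := by linarith [hrsl]
  have he2u : (60000 * rs - 147159) / 284 < -(66765/100000:ℝ) := by linarith [hrsu]
  have hT2 : -(q1v * y ^ 2) < -(160046/1000000:ℝ) := by nlinarith [hq1l, hq1u, hysq_l, hysq_u]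
  have hT3 : (60000 * rs - 147159) / 284 * y < -(513556/1000000:ℝ) := by
    nlinarith [he2l, he2u, hyl, hyu]
  have h : y ^ 3 - q1v * y ^ 2 + (60000 * rs - 147159) / 284 * y + q3v < 0 := by
    linarith [hy3, hT2, hT3, hq3u]
  exact ne_of_lt h

lemma sign1a : u3 (11/500) < 0 := by rw [hueq]; nlinarith [hrsl, hrsu]
lemma sign1b : 0 < u3 (221/10000) := by rw [hueq]; nlinarith [hrsl, hrsu]
lemma sign2a : 0 < u3 (5918/10000) := by rw [hueq]; nlinarith [hrsl, hrsu]
lemma sign2b : u3 (5919/10000) < 0 := by rw [hueq]; nlinarith [hrsl, hrsu]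
lemma sign3a : u3 (7946/10000) < 0 := by rw [hueq]; nlinarith [hrsl, hrsu]
lemma sign3b : 0 < u3 (7947/10000) := by rw [hueq]; nlinarith [hrsl, hrsu]

set_option maxHeartbeats 2000000 in
/-- the cubic u₃ has exactly three real roots τ₁ < τ₂ < τ₃, all in (0, 1);
with z₁ = −√τ₃, z₃ = −√τ₁, z₅ = √τ₂ one has Z(z₁) = Z(z₃) = Z(z₅) = 1 and
Z′(z₁) = Z′(z₃) = Z′(z₅) = 0. -/
theorem stmt13 :
    ∃ τ1 τ2 τ3 : ℝ,
      τ1 < τ2 ∧ τ2 < τ3 ∧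
      u3 τ1 = 0 ∧ u3 τ2 = 0 ∧ u3 τ3 = 0 ∧
      (∀ x : ℝ, u3 x = 0 → x = τ1 ∨ x = τ2 ∨ x = τ3) ∧
      τ1 ∈ Set.Ioo (0 : ℝ) 1 ∧ τ2 ∈ Set.Ioo (0 : ℝ) 1 ∧ τ3 ∈ Set.Ioo (0 : ℝ) 1 ∧
      Z (-Real.sqrt τ3) = 1 ∧ Z (-Real.sqrt τ1) = 1 ∧ Z (Real.sqrt τ2) = 1 ∧
      deriv Z (-Real.sqrt τ3) = 0 ∧ deriv Z (-Real.sqrt τ1) = 0 ∧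
      deriv Z (Real.sqrt τ2) = 0 := by
  -- sign evaluations
  -- IVT
  obtain ⟨τ1, hτ1I, hτ1⟩ := intermediate_value_Icc (by norm_num : (11/500:ℝ) ≤ 221/10000)
    hu3cont.continuousOn ⟨le_of_lt sign1a, le_of_lt sign1b⟩
  obtain ⟨τ2, hτ2I, hτ2⟩ := intermediate_value_Icc' (by norm_num : (5918/10000:ℝ) ≤ 5919/10000)
    hu3cont.continuousOn ⟨le_of_lt sign2b, le_of_lt sign2a⟩
  obtain ⟨τ3, hτ3I, hτ3⟩ := intermediate_value_Icc (by norm_num : (7946/10000:ℝ) ≤ 7947/10000)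
    hu3cont.continuousOn ⟨le_of_lt sign3a, le_of_lt sign3b⟩
  obtain ⟨hτ1l, hτ1u⟩ := hτ1I
  obtain ⟨hτ2l, hτ2u⟩ := hτ2I
  obtain ⟨hτ3l, hτ3u⟩ := hτ3I
  have h12 : τ1 < τ2 := by linarith
  have h23 : τ2 < τ3 := by linarith
  -- sqrt bounds
  have hτ1nn : (0:ℝ) ≤ τ1 := by linarith
  have hτ2nn : (0:ℝ) ≤ τ2 := by linarith
  have hτ3nn : (0:ℝ) ≤ τ3 := by linarith
  have hs1 := Real.sq_sqrt hτ1nn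
  have hs2 := Real.sq_sqrt hτ2nn
  have hs3 := Real.sq_sqrt hτ3nn
  have hn1 := Real.sqrt_nonneg τ1
  have hn2 := Real.sqrt_nonneg τ2
  have hn3 := Real.sqrt_nonneg τ3
  have hy3l : (8914/10000:ℝ) < Real.sqrt τ3 := by nlinarith [hs3, hn3]
  have hy3u : Real.sqrt τ3 < (8915/10000:ℝ) := by nlinarith [hs3, hn3]
  have hy1l : (1483/10000:ℝ) < Real.sqrt τ1 := by nlinarith [hs1, hn1]
  have hy1u : Real.sqrt τ1 < (1487/10000:ℝ) := by nlinarith [hs1, hn1]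
  have hy2l : (7692/10000:ℝ) < Real.sqrt τ2 := by nlinarith [hs2, hn2]
  have hy2u : Real.sqrt τ2 < (7694/10000:ℝ) := by nlinarith [hs2, hn2]
  have hp3 := main_pt (-Real.sqrt τ3)
    (by rw [show (-Real.sqrt τ3)^2 = Real.sqrt τ3 ^ 2 from by ring, hs3]; exact hτ3)
    (vt_ne3 (-Real.sqrt τ3) (by linarith) (by linarith))
  have hp1 := main_pt (-Real.sqrt τ1)
    (by rw [show (-Real.sqrt τ1)^2 = Real.sqrt τ1 ^ 2 from by ring, hs1]; exact hτ1)
    (vt_ne1 (-Real.sqrt τ1) (by linarith) (by linarith))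
  have hp2 := main_pt (Real.sqrt τ2)
    (by rw [hs2]; exact hτ2)
    (vt_ne2 (Real.sqrt τ2) hy2l hy2u)
  -- uniqueness
  have huniq : ∀ x : ℝ, u3 x = 0 → x = τ1 ∨ x = τ2 ∨ x = τ3 := by
    have hcl := cubic_classify 45812608 (50114778876 - 20485615800 * rs)
      (24283711656924 - 9913774403400 * rs) (208899235967 - 85282949550 * rs)
      (by norm_num) τ1 τ2 τ3 (ne_of_lt h12) (ne_of_lt (lt_trans h12 h23)) (ne_of_lt h23)
      (by rw [← hueq τ1]; exact hτ1) (by rw [← hueq τ2]; exact hτ2) (by rw [← hueq τ3]; exact hτ3)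
    intro x hx
    exact hcl x (by rw [← hueq x]; exact hx)
  exact ⟨τ1, τ2, τ3, h12, h23, hτ1, hτ2, hτ3, huniq,
    ⟨by linarith, by linarith⟩, ⟨by linarith, by linarith⟩, ⟨by linarith, by linarith⟩,
    hp3.1, hp1.1, hp2.1, hp3.2, hp1.2, hp2.2⟩
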